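/- Let D be a Borel probability measure on M_∞(A) invariant and ergodic under the S_∞ × S_∞ action by row and column permutations. Then for D-almost every matrix R = (r_{ij}), for every cylinder set B ⊂ A^∞ from a fixed countable generating algebra, the limit m_R(B) = lim_{n→∞} (1/n!) Σ_{g ∈ S_n} χ_B((r_{i, g⁻¹(1)})_{i≥1}) exists, and m_R extends to a Borel probability measure on A^ℕ. -/

import Mathlib

open MeasureTheory ProbabilityTheory Filter
open scoped symmDiff Classical ENNReal NNReal
set_option linter.unusedSectionVars false
set_option maxHeartbeats 1000000

section Aux
variable {A : Type*} [MeasurableSpace A]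

noncomputable def permCol (τ : Equiv.Perm ℕ) : (ℕ × ℕ → A) → (ℕ × ℕ → A) :=
  fun R ij => R (ij.1, τ ij.2)

lemma measurable_permCol (τ : Equiv.Perm ℕ) : Measurable (permCol (A := A) τ) :=
  measurable_pi_lambda _ (fun _ => measurable_pi_apply _)

noncomputable def xi (k : ℕ) (C : Set (Fin k → A)) (c : ℕ) : (ℕ × ℕ → A) → ℝ :=
  fun R => if (fun j : Fin k => R (j.val, c)) ∈ C then 1 else 0

lemma xi_permCol (k : ℕ) (C : Set (Fin k → A)) (c : ℕ) (τ : Equiv.Perm ℕ)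
    (R : ℕ × ℕ → A) : xi k C c (permCol τ R) = xi k C (τ c) R := rfl

lemma measurable_xi (k : ℕ) {C : Set (Fin k → A)} (hC : MeasurableSet C) (c : ℕ) :
    Measurable (xi (A := A) k C c) := by
  have h : Measurable (fun R : ℕ × ℕ → A => (fun j : Fin k => R (j.val, c))) :=
    measurable_pi_lambda _ (fun _ => measurable_pi_apply _)
  exact Measurable.ite (h hC) measurable_const measurable_const

lemma xi_nonneg (k : ℕ) (C : Set (Fin k → A)) (c : ℕ) (R : ℕ × ℕ → A) :
    0 ≤ xi k C c R := by unfold xi; split <;> norm_num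

lemma xi_le_one (k : ℕ) (C : Set (Fin k → A)) (c : ℕ) (R : ℕ × ℕ → A) :
    xi k C c R ≤ 1 := by unfold xi; split <;> norm_num

lemma xi_sq (k : ℕ) (C : Set (Fin k → A)) (c : ℕ) (R : ℕ × ℕ → A) :
    xi k C c R * xi k C c R = xi k C c R := by unfold xi; split <;> norm_num

noncomputable def ces (k : ℕ) (C : Set (Fin k → A)) (n : ℕ) : (ℕ × ℕ → A) → ℝ :=
  fun R => ((n : ℝ) + 1)⁻¹ * ∑ c ∈ Finset.range (n + 1), xi k C c R

lemma measurable_ces (k : ℕ) {C : Set (Fin k → A)} (hC : MeasurableSet C) (n : ℕ) :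
    Measurable (ces (A := A) k C n) :=
  (Finset.measurable_sum _ (fun c _ => measurable_xi k hC c)).const_mul _

lemma ces_nonneg (k : ℕ) (C : Set (Fin k → A)) (n : ℕ) (R : ℕ × ℕ → A) :
    0 ≤ ces k C n R :=
  mul_nonneg (by positivity) (Finset.sum_nonneg fun c _ => xi_nonneg k C c R)

lemma ces_le_one (k : ℕ) (C : Set (Fin k → A)) (n : ℕ) (R : ℕ × ℕ → A) :
    ces k C n R ≤ 1 := by
  have h : ∑ c ∈ Finset.range (n + 1), xi k C c R ≤ (n + 1 : ℝ) := by
    calc ∑ c ∈ Finset.range (n + 1), xi k C c R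
        ≤ ∑ _c ∈ Finset.range (n + 1), (1 : ℝ) :=
          Finset.sum_le_sum fun c _ => xi_le_one k C c R
      _ = (n + 1 : ℝ) := by simp
  have hpos : (0:ℝ) < (n : ℝ) + 1 := by positivity
  rw [ces, inv_mul_le_iff₀ hpos]
  simpa using h

lemma perm_avg_eq (n : ℕ) (F : ℕ → ℝ) :
    (1 / (Nat.factorial (n + 1) : ℝ)) *
        ∑ g : Equiv.Perm (Fin (n + 1)), F ((g⁻¹ 0).val)
      = ((n : ℝ) + 1)⁻¹ * ∑ c ∈ Finset.range (n + 1), F c := by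
  have h1 : ∑ g : Equiv.Perm (Fin (n + 1)), F ((g⁻¹ 0).val)
      = ∑ g : Equiv.Perm (Fin (n + 1)), F ((g 0).val) :=
    Equiv.sum_comp (Equiv.inv (Equiv.Perm (Fin (n+1)))) (fun g => F ((g 0).val))
  have h2 : ∑ g : Equiv.Perm (Fin (n + 1)), F ((g 0).val)
      = ∑ pe : Fin (n+1) × Equiv.Perm (Fin n),
          F (((Equiv.Perm.decomposeFin.symm pe) 0).val) :=
    (Equiv.sum_comp Equiv.Perm.decomposeFin.symm (fun g => F ((g 0).val))).symm
  have h3 : ∑ pe : Fin (n+1) × Equiv.Perm (Fin n),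
        F (((Equiv.Perm.decomposeFin.symm pe) 0).val)
      = (Nat.factorial n : ℝ) * ∑ c ∈ Finset.range (n + 1), F c := by
    rw [Fintype.sum_prod_type]
    simp only [Equiv.Perm.decomposeFin_symm_apply_zero]
    rw [← Fin.sum_univ_eq_sum_range (fun c => F c) (n+1)]
    rw [Finset.sum_comm]
    simp [Finset.sum_const, Fintype.card_perm, Fintype.card_fin, nsmul_eq_mul, mul_comm]
  rw [h1, h2, h3, Nat.factorial_succ]
  have hn : (Nat.factorial n : ℝ) ≠ 0 := by positivity
  push_cast
  field_simp

end Aux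

section Moments
variable {A : Type*} [MeasurableSpace A]
  (k : ℕ) (C : Set (Fin k → A)) (hC : MeasurableSet C)
  (D : Measure (ℕ × ℕ → A)) [IsProbabilityMeasure D]
  (hmap : ∀ τ : Equiv.Perm ℕ, Measure.map (permCol (A := A) τ) D = D)

include hC hmap

lemma integrable_of_bdd {f : (ℕ × ℕ → A) → ℝ} (hf : Measurable f)
    (hb : ∀ R, |f R| ≤ 1) : Integrable f D :=
  (memLp_top_of_bound hf.aestronglyMeasurable 1 (Eventually.of_forall hb)).integrable le_top

lemma integrable_xi (c : ℕ) : Integrable (xi k C c) D :=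
  integrable_of_bdd k C hC D hmap (measurable_xi k hC c)
    (fun R => abs_le.2 ⟨by linarith [xi_nonneg k C c R], xi_le_one k C c R⟩)

lemma integrable_xx (c d : ℕ) : Integrable (fun R => xi k C c R * xi k C d R) D :=
  integrable_of_bdd k C hC D hmap ((measurable_xi k hC c).mul (measurable_xi k hC d))
    (fun R => abs_le.2 ⟨by nlinarith [xi_nonneg k C c R, xi_nonneg k C d R],
      by nlinarith [xi_nonneg k C c R, xi_nonneg k C d R, xi_le_one k C c R, xi_le_one k C d R]⟩)

lemma int_permCol (τ : Equiv.Perm ℕ) {f : (ℕ × ℕ → A) → ℝ}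
    (hf : AEStronglyMeasurable f D) :
    ∫ R, f (permCol τ R) ∂D = ∫ R, f R ∂D := by
  conv_rhs => rw [← hmap τ]
  rw [integral_map (measurable_permCol τ).aemeasurable]
  rw [hmap τ]; exact hf

lemma int_xx_perm (τ : Equiv.Perm ℕ) (c d : ℕ) :
    ∫ R, xi k C (τ c) R * xi k C (τ d) R ∂D = ∫ R, xi k C c R * xi k C d R ∂D := by
  have := int_permCol k C hC D hmap τ
    (f := fun R => xi k C c R * xi k C d R)
    (((measurable_xi k hC c).mul (measurable_xi k hC d)).aestronglyMeasurable)
  simpa only [xi_permCol] using this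

lemma int_x_perm (τ : Equiv.Perm ℕ) (c : ℕ) :
    ∫ R, xi k C (τ c) R ∂D = ∫ R, xi k C c R ∂D := by
  have := int_permCol k C hC D hmap τ (f := fun R => xi k C c R)
    ((measurable_xi k hC c).aestronglyMeasurable)
  simpa only [xi_permCol] using this

lemma int_xx_offdiag {c d : ℕ} (hcd : c ≠ d) :
    ∫ R, xi k C c R * xi k C d R ∂D = ∫ R, xi k C 0 R * xi k C 1 R ∂D := by
  classical
  set s : Equiv.Perm ℕ := Equiv.swap 0 c with hs
  set e : ℕ := s d with he
  have he0 : e ≠ 0 := by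
    intro h
    apply hcd
    have hd : d = s e := by rw [he, hs, Equiv.swap_apply_self]
    rw [h, hs, Equiv.swap_apply_left] at hd
    exact hd.symm
  set τ : Equiv.Perm ℕ := s * Equiv.swap 1 e with hτ
  have hτ0 : τ 0 = c := by
    have h10 : (Equiv.swap 1 e) 0 = 0 :=
      Equiv.swap_apply_of_ne_of_ne (by norm_num) (Ne.symm he0)
    simp [hτ, Equiv.Perm.mul_apply, h10, hs, Equiv.swap_apply_left]
  have hτ1 : τ 1 = d := by
    have : (Equiv.swap 1 e) 1 = e := Equiv.swap_apply_left 1 e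
    simp [hτ, Equiv.Perm.mul_apply, this, he, hs, Equiv.swap_apply_self]
  have := int_xx_perm k C hC D hmap τ 0 1
  rw [hτ0, hτ1] at this
  exact this

lemma int_x_eq (c : ℕ) : ∫ R, xi k C c R ∂D = ∫ R, xi k C 0 R ∂D := by
  have := int_x_perm k C hC D hmap (Equiv.swap 0 c) c
  rw [Equiv.swap_apply_right] at this
  exact this.symm

noncomputable def alpha : ℝ := ∫ R, xi k C 0 R * xi k C 1 R ∂D
noncomputable def beta : ℝ := ∫ R, xi k C 0 R ∂D

lemma int_xx_eq (c d : ℕ) :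
    ∫ R, xi k C c R * xi k C d R ∂D
      = if c = d then beta k C D else alpha k C D := by
  by_cases h : c = d
  · subst h
    simp only [if_pos rfl, _root_.beta]
    rw [show (fun R => xi k C c R * xi k C c R) = xi k C c from funext (xi_sq k C c)]
    exact int_x_eq k C hC D hmap c
  · rw [if_neg h]
    exact int_xx_offdiag k C hC D hmap h

lemma alpha_nonneg : 0 ≤ alpha k C D :=
  integral_nonneg fun R => mul_nonneg (xi_nonneg k C 0 R) (xi_nonneg k C 1 R)

lemma beta_le_one : beta k C D ≤ 1 := by
  have : ∫ R, xi k C 0 R ∂D ≤ ∫ _R, (1:ℝ) ∂D :=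
    integral_mono (integrable_xi k C hC D hmap 0) (integrable_const 1) (xi_le_one k C 0)
  simpa [_root_.beta] using this

lemma J_eq {N M : ℕ} (h : N ≤ M) :
    ∫ R, ces k C N R * ces k C M R ∂D
      = alpha k C D + (beta k C D - alpha k C D) / ((M : ℝ) + 1) := by
  have hrw : ∀ R, ces k C N R * ces k C M R
      = ∑ c ∈ Finset.range (N+1), ∑ d ∈ Finset.range (M+1),
          ((N:ℝ)+1)⁻¹ * ((M:ℝ)+1)⁻¹ * (xi k C c R * xi k C d R) := by
    intro R
    rw [ces, ces, Finset.mul_sum]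
    rw [Finset.sum_mul]
    refine Finset.sum_congr rfl fun c _ => ?_
    rw [Finset.mul_sum, Finset.mul_sum]
    refine Finset.sum_congr rfl fun d _ => ?_
    ring
  calc ∫ R, ces k C N R * ces k C M R ∂D
      = ∑ c ∈ Finset.range (N+1), ∑ d ∈ Finset.range (M+1),
          ((N:ℝ)+1)⁻¹ * ((M:ℝ)+1)⁻¹ * ∫ R, xi k C c R * xi k C d R ∂D := by
        simp_rw [hrw]
        rw [integral_finset_sum _ (fun c _ => integrable_finset_sum _
          (fun d _ => ((integrable_xx k C hC D hmap c d).const_mul _)))]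
        refine Finset.sum_congr rfl fun c _ => ?_
        rw [integral_finset_sum _ (fun d _ => ((integrable_xx k C hC D hmap c d).const_mul _))]
        refine Finset.sum_congr rfl fun d _ => ?_
        exact integral_const_mul _ _
    _ = alpha k C D + (beta k C D - alpha k C D) / ((M : ℝ) + 1) := by
        simp_rw [int_xx_eq k C hC D hmap]
        have hin : ∀ c ∈ Finset.range (N+1),
            ∑ d ∈ Finset.range (M+1),
              ((N:ℝ)+1)⁻¹ * ((M:ℝ)+1)⁻¹ *
                (if c = d then beta k C D else alpha k C D)
            = ((N:ℝ)+1)⁻¹ * ((M:ℝ)+1)⁻¹ *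
                ((beta k C D - alpha k C D) + ((M:ℝ)+1) * alpha k C D) := by
          intro c hc
          have hcM : c ∈ Finset.range (M+1) :=
            Finset.mem_range.2 (lt_of_lt_of_le (Finset.mem_range.1 hc) (by omega))
          rw [← Finset.mul_sum]
          congr 1
          have hsplit : ∀ d, (if c = d then beta k C D else alpha k C D)
              = (if c = d then beta k C D - alpha k C D else 0) + alpha k C D := by
            intro d; split <;> ring
          simp_rw [hsplit]
          rw [Finset.sum_add_distrib, Finset.sum_ite_eq, if_pos hcM,
            Finset.sum_const, Finset.card_range, nsmul_eq_mul]
          push_cast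
          ring
        rw [Finset.sum_congr rfl hin, Finset.sum_const, Finset.card_range]
        have hN : ((N:ℝ)+1) ≠ 0 := by positivity
        have hM : ((M:ℝ)+1) ≠ 0 := by positivity
        rw [nsmul_eq_mul]
        push_cast
        field_simp
        ring

lemma integrable_cc (n m : ℕ) : Integrable (fun R => ces k C n R * ces k C m R) D :=
  integrable_of_bdd k C hC D hmap ((measurable_ces k hC n).mul (measurable_ces k hC m))
    (fun R => abs_le.2 ⟨by nlinarith [ces_nonneg k C n R, ces_nonneg k C m R],
      by nlinarith [ces_nonneg k C n R, ces_nonneg k C m R,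
        ces_le_one k C n R, ces_le_one k C m R]⟩)

lemma var_bound {N M : ℕ} (h : N ≤ M) :
    ∫ R, (ces k C N R - ces k C M R)^2 ∂D ≤ ((N:ℝ)+1)⁻¹ := by
  have hexp : ∀ R, (ces k C N R - ces k C M R)^2
      = ces k C N R * ces k C N R - 2 * (ces k C N R * ces k C M R)
        + ces k C M R * ces k C M R := by intro R; ring
  have hint : ∫ R, (ces k C N R - ces k C M R)^2 ∂D
      = (alpha k C D + (beta k C D - alpha k C D) / ((N : ℝ) + 1))
        - 2 * (alpha k C D + (beta k C D - alpha k C D) / ((M : ℝ) + 1))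
        + (alpha k C D + (beta k C D - alpha k C D) / ((M : ℝ) + 1)) := by
    simp_rw [hexp]
    have i1 : Integrable (fun R => ces k C N R * ces k C N R
        - 2 * (ces k C N R * ces k C M R)) D :=
      (integrable_cc k C hC D hmap N N).sub ((integrable_cc k C hC D hmap N M).const_mul 2)
    have i2 : Integrable (fun R => 2 * (ces k C N R * ces k C M R)) D :=
      (integrable_cc k C hC D hmap N M).const_mul 2
    rw [integral_add i1 (integrable_cc k C hC D hmap M M),
      integral_sub (integrable_cc k C hC D hmap N N) i2,
      integral_const_mul,
      J_eq k C hC D hmap (le_refl N), J_eq k C hC D hmap h, J_eq k C hC D hmap (le_refl M)]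
  rw [hint]
  have h1 : (0:ℝ) < (N:ℝ)+1 := by positivity
  have h2 : (0:ℝ) < (M:ℝ)+1 := by positivity
  have h3 : ((M:ℝ)+1)⁻¹ ≤ ((N:ℝ)+1)⁻¹ := by
    have : (N:ℝ) ≤ (M:ℝ) := Nat.cast_le.2 h
    exact inv_anti₀ h1 (by linarith)
  have h4 : ((N:ℝ)+1)⁻¹ ≤ 1 := by
    rw [inv_le_one_iff₀]; right; linarith
  have ha := alpha_nonneg k C hC D hmap
  have hb := beta_le_one k C hC D hmap
  have hb2 : beta k C D - alpha k C D ≤ 1 := by linarith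
  have key : ∀ u x y : ℝ, u ≤ 1 → 0 ≤ y → y ≤ x → x ≤ 1 → u * x - u * y ≤ x := by
    intro u x y hu hy hyx hx1; nlinarith
  have hval : alpha k C D + (beta k C D - alpha k C D) / ((N:ℝ) + 1)
      - 2 * (alpha k C D + (beta k C D - alpha k C D) / ((M:ℝ) + 1))
      + (alpha k C D + (beta k C D - alpha k C D) / ((M:ℝ) + 1))
      = (beta k C D - alpha k C D) * ((N:ℝ)+1)⁻¹
        - (beta k C D - alpha k C D) * ((M:ℝ)+1)⁻¹ := by
    field_simp; ring
  rw [hval]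
  exact key _ _ _ hb2 (le_of_lt (inv_pos.2 h2)) h3 h4

end Moments
section Aux2
variable {A : Type*} [MeasurableSpace A]

-- limit function
noncomputable def XX (k : ℕ) (C : Set (Fin k → A)) : (ℕ × ℕ → A) → ℝ :=
  fun R => (Filter.limsup (fun j => ENNReal.ofReal (ces k C (4^j) R)) atTop).toReal

lemma measurable_XX (k : ℕ) {C : Set (Fin k → A)} (hC : MeasurableSet C) :
    Measurable (XX (A := A) k C) := by
  apply ENNReal.measurable_toReal.comp
  exact Measurable.limsup (fun j =>
    ENNReal.measurable_ofReal.comp (measurable_ces k hC (4^j)))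

lemma XX_nonneg (k : ℕ) (C : Set (Fin k → A)) (R : ℕ × ℕ → A) : 0 ≤ XX k C R :=
  ENNReal.toReal_nonneg

lemma XX_le_one (k : ℕ) (C : Set (Fin k → A)) (R : ℕ × ℕ → A) : XX k C R ≤ 1 := by
  have h : Filter.limsup (fun j => ENNReal.ofReal (ces k C (4^j) R)) atTop ≤ 1 := by
    exact limsup_le_of_le (by isBoundedDefault)
      (Eventually.of_forall fun j => ENNReal.ofReal_le_one.2 (ces_le_one k C (4^j) R))
  calc (Filter.limsup (fun j => ENNReal.ofReal (ces k C (4^j) R)) atTop).toReal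
      ≤ (1 : ℝ≥0∞).toReal := ENNReal.toReal_mono (by norm_num) h
    _ = 1 := by simp

lemma XX_eq_of_tendsto (k : ℕ) (C : Set (Fin k → A)) (R : ℕ × ℕ → A) {L : ℝ}
    (hL : 0 ≤ L) (h : Tendsto (fun j => ces k C (4^j) R) atTop (nhds L)) :
    XX k C R = L := by
  have h2 : Tendsto (fun j => ENNReal.ofReal (ces k C (4^j) R)) atTop
      (nhds (ENNReal.ofReal L)) := (ENNReal.continuous_ofReal.tendsto L).comp h
  rw [XX, h2.limsup_eq, ENNReal.toReal_ofReal hL]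

lemma ces_permCol_eq (k : ℕ) (C : Set (Fin k → A)) (τ : Equiv.Perm ℕ) (n : ℕ)
    (hτ : {x : ℕ | τ x ≠ x} ⊆ ↑(Finset.range (n+1))) (R : ℕ × ℕ → A) :
    ces k C n (permCol τ R) = ces k C n R := by
  rw [ces, ces]
  congr 1
  calc ∑ c ∈ Finset.range (n + 1), xi k C c (permCol τ R)
      = ∑ c ∈ Finset.range (n + 1), xi k C (τ c) R := by
        refine Finset.sum_congr rfl fun c _ => xi_permCol k C c τ R
    _ = ∑ c ∈ Finset.range (n + 1), xi k C c R :=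
        Equiv.Perm.sum_comp τ (Finset.range (n+1)) (fun c => xi k C c R) hτ

lemma XX_permCol_swap (k : ℕ) (C : Set (Fin k → A)) (a b : ℕ) (R : ℕ × ℕ → A) :
    XX k C (permCol (Equiv.swap a b) R) = XX k C R := by
  rw [XX, XX]
  congr 1
  apply Filter.limsup_congr
  filter_upwards [Filter.eventually_ge_atTop (max a b)] with j hj
  congr 1
  apply ces_permCol_eq
  intro x hx
  simp only [Set.mem_setOf_eq] at hx
  have hxab : x = a ∨ x = b := by
    by_contra hcon
    push_neg at hcon
    exact hx (Equiv.swap_apply_of_ne_of_ne hcon.1 hcon.2)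
  have hj4 : j < 4^j := Nat.lt_pow_self (by norm_num)
  have : x ≤ max a b := by rcases hxab with rfl | rfl <;> simp
  simp only [Finset.coe_range, Set.mem_Iio]
  omega

-- deterministic interpolation bound
lemma ces_diff_bound (k : ℕ) (C : Set (Fin k → A)) {m n : ℕ} (h : m ≤ n)
    (R : ℕ × ℕ → A) :
    |ces k C n R - ces k C m R| ≤ 2 * ((n : ℝ) - m) / ((n : ℝ) + 1) := by
  have hsplit : Finset.range (n+1) = Finset.range (m+1) ∪ Finset.Ico (m+1) (n+1) := by
    rw [Finset.range_eq_Ico, Finset.range_eq_Ico]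
    rw [Finset.Ico_union_Ico_eq_Ico (by omega) (by omega)]
  have hdisj : Disjoint (Finset.range (m+1)) (Finset.Ico (m+1) (n+1)) := by
    simp [Finset.disjoint_left, Finset.mem_range, Finset.mem_Ico]
    omega
  set P := ∑ c ∈ Finset.range (m+1), xi k C c R with hP
  set Q := ∑ c ∈ Finset.Ico (m+1) (n+1), xi k C c R with hQ
  have hsum : ∑ c ∈ Finset.range (n+1), xi k C c R = P + Q := by
    rw [hsplit, Finset.sum_union hdisj]
  have hP0 : 0 ≤ P := Finset.sum_nonneg fun c _ => xi_nonneg k C c R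
  have hP1 : P ≤ (m:ℝ) + 1 := by
    calc P ≤ ∑ _c ∈ Finset.range (m+1), (1:ℝ) :=
        Finset.sum_le_sum fun c _ => xi_le_one k C c R
      _ = (m:ℝ)+1 := by simp
  have hQ0 : 0 ≤ Q := Finset.sum_nonneg fun c _ => xi_nonneg k C c R
  have hQ1 : Q ≤ (n:ℝ) - m := by
    calc Q ≤ ∑ _c ∈ Finset.Ico (m+1) (n+1), (1:ℝ) :=
        Finset.sum_le_sum fun c _ => xi_le_one k C c R
      _ = (n:ℝ) - m := by
        rw [Finset.sum_const, Nat.card_Ico]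
        have : (n + 1) - (m + 1) = n - m := by omega
        rw [this, nsmul_eq_mul, mul_one]
        push_cast [Nat.cast_sub h]
        ring
  have ha : (0:ℝ) < (n:ℝ) + 1 := by positivity
  have hb : (0:ℝ) < (m:ℝ) + 1 := by positivity
  have hmn : (m:ℝ) ≤ (n:ℝ) := Nat.cast_le.2 h
  rw [ces, ces, hsum]
  have hxy : ((n:ℝ)+1)⁻¹ ≤ ((m:ℝ)+1)⁻¹ := inv_anti₀ hb (by linarith)
  rw [abs_le]
  constructor
  · have key : ((m:ℝ)+1)⁻¹ * P - ((n:ℝ)+1)⁻¹ * (P+Q) ≤ 2 * ((n : ℝ) - m) / ((n : ℝ) + 1) := by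
      rw [div_eq_mul_inv]
      nlinarith [inv_pos.2 ha, inv_pos.2 hb,
        mul_inv_cancel₀ (ne_of_gt hb), mul_inv_cancel₀ (ne_of_gt ha),
        mul_le_mul_of_nonneg_right hP1 (sub_nonneg.2 hxy),
        mul_nonneg hQ0 (le_of_lt (inv_pos.2 ha)),
        mul_nonneg (le_of_lt (inv_pos.2 ha)) (sub_nonneg.2 hmn)]
    linarith
  · have key : ((n:ℝ)+1)⁻¹ * (P+Q) - ((m:ℝ)+1)⁻¹ * P ≤ 2 * ((n : ℝ) - m) / ((n : ℝ) + 1) := by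
      rw [div_eq_mul_inv]
      have f1 : ((n:ℝ)+1)⁻¹ * P ≤ ((m:ℝ)+1)⁻¹ * P := mul_le_mul_of_nonneg_right hxy hP0
      have f2 : ((n:ℝ)+1)⁻¹ * Q ≤ ((n:ℝ)+1)⁻¹ * ((n:ℝ) - m) :=
        mul_le_mul_of_nonneg_left hQ1 (le_of_lt (inv_pos.2 ha))
      have f3 : 0 ≤ ((n:ℝ)+1)⁻¹ * ((n:ℝ) - m) :=
        mul_nonneg (le_of_lt (inv_pos.2 ha)) (sub_nonneg.2 hmn)
      nlinarith
    linarith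
end Aux2
section Conv
variable {A : Type*} [MeasurableSpace A]
  (k : ℕ) (C : Set (Fin k → A)) (hC : MeasurableSet C)
  (D : Measure (ℕ × ℕ → A)) [IsProbabilityMeasure D]
  (hmap : ∀ τ : Equiv.Perm ℕ, Measure.map (permCol (A := A) τ) D = D)

include hC hmap

lemma integrable_sq_diff (n m : ℕ) :
    Integrable (fun R => (ces k C n R - ces k C m R)^2) D := by
  apply integrable_of_bdd k C hC D hmap
    (((measurable_ces k hC n).sub (measurable_ces k hC m)).pow_const 2)
  intro R
  rw [abs_le]
  constructor
  · nlinarith [sq_nonneg (ces k C n R - ces k C m R)]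
  · simp only [Pi.sub_apply]
    nlinarith [ces_nonneg k C n R, ces_le_one k C n R,
      ces_nonneg k C m R, ces_le_one k C m R]

lemma abs_diff_int_bound (j : ℕ) :
    ∫ R, |ces k C (4^j) R - ces k C (4^(j+1)) R| ∂D ≤ ((2:ℝ)⁻¹)^j := by
  set c : ℝ := ((2:ℝ)⁻¹)^j with hc
  have hc0 : 0 < c := by positivity
  set d : (ℕ × ℕ → A) → ℝ := fun R => ces k C (4^j) R - ces k C (4^(j+1)) R with hd
  have hpt : ∀ R, |d R| ≤ c/2 + (d R)^2 * (2*c)⁻¹ := by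
    intro R
    have h1 : 0 ≤ (|d R| - c)^2 := sq_nonneg _
    have h2 : |d R|^2 = (d R)^2 := sq_abs _
    have h3 : (0:ℝ) < 2*c := by positivity
    rw [← sub_nonneg]
    have expand : c/2 + d R^2 * (2*c)⁻¹ - |d R|
        = ((d R)^2 - 2*c*|d R| + c^2) * (2*c)⁻¹ := by
      field_simp
      ring
    rw [expand]
    apply mul_nonneg _ (le_of_lt (inv_pos.2 h3))
    nlinarith
  have hint : ∫ R, |d R| ∂D ≤ c/2 + (∫ R, (d R)^2 ∂D) * (2*c)⁻¹ := by
    have hi1 : Integrable (fun R => |d R|) D :=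
      (integrable_of_bdd k C hC D hmap
        ((measurable_ces k hC (4^j)).sub (measurable_ces k hC (4^(j+1))))
        (fun R => by
          rw [abs_le]
          constructor
          · simp only [Pi.sub_apply]
            nlinarith [ces_nonneg k C (4^j) R, ces_le_one k C (4^(j+1)) R]
          · simp only [Pi.sub_apply]
            nlinarith [ces_le_one k C (4^j) R, ces_nonneg k C (4^(j+1)) R])).abs
    have hi2 : Integrable (fun R => c/2 + (d R)^2 * (2*c)⁻¹) D :=
      (integrable_const _).add ((integrable_sq_diff k C hC D hmap _ _).mul_const _)
    calc ∫ R, |d R| ∂D ≤ ∫ R, (c/2 + (d R)^2 * (2*c)⁻¹) ∂D :=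
          integral_mono hi1 hi2 hpt
      _ = c/2 + (∫ R, (d R)^2 ∂D) * (2*c)⁻¹ := by
          rw [integral_add (integrable_const _)
            ((integrable_sq_diff k C hC D hmap _ _).mul_const _),
            integral_const, integral_mul_const]
          simp [measure_univ]
          left; rfl
  have hvar : ∫ R, (d R)^2 ∂D ≤ ((4:ℝ)⁻¹)^j := by
    have h1 : (4:ℕ)^j ≤ 4^(j+1) := Nat.pow_le_pow_right (by norm_num) (by omega)
    have h2 := var_bound k C hC D hmap h1
    refine h2.trans ?_
    have : ((4:ℝ)⁻¹)^j = ((4:ℝ)^j)⁻¹ := by rw [← inv_pow]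
    rw [this]
    apply inv_anti₀ (by positivity)
    push_cast
    linarith
  have hcsq : ((4:ℝ)⁻¹)^j = c^2 := by
    rw [hc, ← pow_mul, mul_comm j 2, pow_mul]
    norm_num
  calc ∫ R, |d R| ∂D ≤ c/2 + (∫ R, (d R)^2 ∂D) * (2*c)⁻¹ := hint
    _ ≤ c/2 + c^2 * (2*c)⁻¹ := by
        apply add_le_add_right
        apply mul_le_mul_of_nonneg_right _ (by positivity)
        rw [← hcsq]; exact hvar
    _ = c := by field_simp; ring

lemma ae_tendsto_sub (idx : Unit) :
    ∀ᵐ R ∂D, Tendsto (fun j => ces k C (4^j) R) atTop (nhds (XX k C R)) := by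
  set d : ℕ → (ℕ × ℕ → A) → ℝ :=
    fun j R => ces k C (4^j) R - ces k C (4^(j+1)) R with hd
  have hdm : ∀ j, Measurable (d j) := fun j =>
    (measurable_ces k hC (4^j)).sub (measurable_ces k hC (4^(j+1)))
  have hL : ∫⁻ R, ∑' j, ENNReal.ofReal |d j R| ∂D < ⊤ := by
    rw [lintegral_tsum (fun j => ((hdm j).abs.ennreal_ofReal).aemeasurable)]
    have hb : ∀ j, ∫⁻ R, ENNReal.ofReal |d j R| ∂D ≤ ENNReal.ofReal (((2:ℝ)⁻¹)^j) := by
      intro j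
      have hi : Integrable (fun R => |d j R|) D := by
        apply integrable_of_bdd k C hC D hmap (hdm j).abs
        intro R
        rw [abs_abs, abs_le]
        simp only [hd]
        constructor
        · nlinarith [ces_nonneg k C (4^j) R, ces_le_one k C (4^(j+1)) R]
        · nlinarith [ces_le_one k C (4^j) R, ces_nonneg k C (4^(j+1)) R]
      rw [← ofReal_integral_eq_lintegral_ofReal hi
        (Eventually.of_forall fun R => abs_nonneg _)]
      exact ENNReal.ofReal_le_ofReal (abs_diff_int_bound k C hC D hmap j)
    calc ∑' j, ∫⁻ R, ENNReal.ofReal |d j R| ∂D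
        ≤ ∑' j : ℕ, ENNReal.ofReal (((2:ℝ)⁻¹)^j) := ENNReal.tsum_le_tsum hb
      _ = ∑' j : ℕ, (ENNReal.ofReal ((2:ℝ)⁻¹))^j := by
          congr 1; funext j; rw [ENNReal.ofReal_pow (by norm_num)]
      _ = (1 - ENNReal.ofReal (2:ℝ)⁻¹)⁻¹ := ENNReal.tsum_geometric _
      _ < ⊤ := by
          rw [ENNReal.inv_lt_top]
          rw [tsub_pos_iff_lt]
          exact ENNReal.ofReal_lt_one.2 (by norm_num)
  have hae : ∀ᵐ R ∂D, ∑' j, ENNReal.ofReal |d j R| < ⊤ :=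
    ae_lt_top (Measurable.ennreal_tsum fun j => (hdm j).abs.ennreal_ofReal) hL.ne
  filter_upwards [hae] with R hR
  have hsum : Summable (fun j => d j R) := by
    have h1 : Summable (fun j => ‖d j R‖₊) := by
      rw [← ENNReal.tsum_coe_ne_top_iff_summable]
      have : ∀ j, (‖d j R‖₊ : ℝ≥0∞) = ENNReal.ofReal |d j R| := fun j =>
        Real.enorm_eq_ofReal_abs _
      rw [tsum_congr this]
      exact hR.ne
    apply Summable.of_norm
    have : ∀ j, ‖d j R‖ = (‖d j R‖₊ : ℝ) := fun j => rfl
    rw [show (fun j => ‖d j R‖) = (fun j => (‖d j R‖₊ : ℝ)) from funext this]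
    exact NNReal.summable_coe.2 h1
  have htel : ∀ J, ces k C (4^J) R = ces k C (4^0) R - ∑ j ∈ Finset.range J, d j R := by
    intro J
    rw [Finset.sum_range_sub' (fun j => ces k C (4^j) R) J]
    ring
  have hten : Tendsto (fun J => ces k C (4^J) R) atTop
      (nhds (ces k C (4^0) R - ∑' j, d j R)) := by
    have h1 : Tendsto (fun J => ∑ j ∈ Finset.range J, d j R) atTop
        (nhds (∑' j, d j R)) := hsum.hasSum.tendsto_sum_nat
    have h2 : Tendsto (fun J => ces k C (4^0) R - ∑ j ∈ Finset.range J, d j R) atTop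
        (nhds (ces k C (4^0) R - ∑' j, d j R)) := tendsto_const_nhds.sub h1
    refine h2.congr fun J => (htel J).symm
  have hL0 : 0 ≤ ces k C (4^0) R - ∑' j, d j R :=
    ge_of_tendsto hten (Eventually.of_forall fun J => ces_nonneg k C (4^J) R)
  rw [XX_eq_of_tendsto k C R hL0 hten]
  exact hten

lemma var_bound_XX (N : ℕ) :
    ∫ R, (ces k C N R - XX k C R)^2 ∂D ≤ ((N:ℝ)+1)⁻¹ := by
  have hlim : Tendsto (fun j => ∫ R, (ces k C N R - ces k C (4^j) R)^2 ∂D) atTop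
      (nhds (∫ R, (ces k C N R - XX k C R)^2 ∂D)) := by
    apply tendsto_integral_filter_of_dominated_convergence (fun _ => (1:ℝ))
    · exact Eventually.of_forall fun j =>
        (((measurable_ces k hC N).sub (measurable_ces k hC (4^j))).pow_const 2).aestronglyMeasurable
    · exact Eventually.of_forall fun j => Eventually.of_forall fun R => by
        have h1 := ces_nonneg k C N R; have h2 := ces_le_one k C N R
        have h3 := ces_nonneg k C (4^j) R; have h4 := ces_le_one k C (4^j) R
        rw [Real.norm_eq_abs, abs_le]
        constructor
        · nlinarith [sq_nonneg (ces k C N R - ces k C (4^j) R)]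
        · nlinarith
    · exact integrable_const 1
    · filter_upwards [ae_tendsto_sub k C hC D hmap ()] with R hR
      exact ((tendsto_const_nhds.sub hR).pow 2)
  apply le_of_tendsto hlim
  filter_upwards [Filter.eventually_ge_atTop N] with j hj
  exact var_bound k C hC D hmap (le_trans hj (Nat.le_of_lt (Nat.lt_pow_self (n := j) (a := 4) (by norm_num))))

lemma ae_tendsto_sq :
    ∀ᵐ R ∂D, Tendsto (fun K => ces k C ((K+1)^2 - 1) R) atTop (nhds (XX k C R)) := by
  set g : ℕ → (ℕ × ℕ → A) → ℝ := fun K R => (ces k C ((K+1)^2 - 1) R - XX k C R)^2 with hg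
  have hgm : ∀ K, Measurable (g K) := fun K =>
    ((measurable_ces k hC _).sub (measurable_XX k hC)).pow_const 2
  have hgnn : ∀ K R, 0 ≤ g K R := fun K R => sq_nonneg _
  have hgi : ∀ K, Integrable (g K) D := by
    intro K
    apply integrable_of_bdd k C hC D hmap (hgm K)
    intro R
    have h1 := ces_nonneg k C ((K+1)^2 - 1) R; have h2 := ces_le_one k C ((K+1)^2 - 1) R
    have h3 := XX_nonneg k C R; have h4 := XX_le_one k C R
    rw [abs_le]
    simp only [hg]
    constructor
    · nlinarith [sq_nonneg (ces k C ((K+1)^2 - 1) R - XX k C R)]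
    · nlinarith
  have hbound : ∀ K, ∫ R, g K R ∂D ≤ (((K:ℝ)+1)^2)⁻¹ := by
    intro K
    have h1 := var_bound_XX k C hC D hmap ((K+1)^2 - 1)
    have h2 : (((K+1)^2 - 1 : ℕ) : ℝ) + 1 = ((K:ℝ)+1)^2 := by
      have : (K+1)^2 - 1 + 1 = (K+1)^2 := by
        have : 1 ≤ (K+1)^2 := Nat.one_le_iff_ne_zero.2 (by positivity)
        omega
      calc (((K+1)^2 - 1 : ℕ) : ℝ) + 1 = (((K+1)^2 - 1 + 1 : ℕ) : ℝ) := by push_cast; ring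
        _ = (((K+1)^2 : ℕ) : ℝ) := by rw [this]
        _ = ((K:ℝ)+1)^2 := by push_cast; ring
    rw [h2] at h1
    exact h1
  have hsum : Summable (fun K : ℕ => (((K:ℝ)+1)^2)⁻¹) := by
    have h := Real.summable_one_div_nat_pow.2 (by norm_num : (1:ℕ) < 2)
    have h2 := (summable_nat_add_iff 1).2 h
    apply h2.congr
    intro K
    rw [one_div]
    norm_num
  have hL : ∫⁻ R, ∑' K, ENNReal.ofReal (g K R) ∂D < ⊤ := by
    rw [lintegral_tsum (fun K => ((hgm K).ennreal_ofReal).aemeasurable)]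
    have hb : ∀ K, ∫⁻ R, ENNReal.ofReal (g K R) ∂D ≤ ENNReal.ofReal ((((K:ℝ)+1)^2)⁻¹) := by
      intro K
      rw [← ofReal_integral_eq_lintegral_ofReal (hgi K)
        (Eventually.of_forall fun R => hgnn K R)]
      exact ENNReal.ofReal_le_ofReal (hbound K)
    calc ∑' K, ∫⁻ R, ENNReal.ofReal (g K R) ∂D
        ≤ ∑' K : ℕ, ENNReal.ofReal ((((K:ℝ)+1)^2)⁻¹) := ENNReal.tsum_le_tsum hb
      _ = ENNReal.ofReal (∑' K : ℕ, (((K:ℝ)+1)^2)⁻¹) :=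
          (ENNReal.ofReal_tsum_of_nonneg (fun K => by positivity) hsum).symm
      _ < ⊤ := ENNReal.ofReal_lt_top
  have hae : ∀ᵐ R ∂D, ∑' K, ENNReal.ofReal (g K R) < ⊤ :=
    ae_lt_top (Measurable.ennreal_tsum fun K => (hgm K).ennreal_ofReal) hL.ne
  filter_upwards [hae] with R hR
  have hzero : Tendsto (fun K => g K R) atTop (nhds 0) := by
    have h1 : Tendsto (fun K => ENNReal.ofReal (g K R)) atTop (nhds 0) :=
      ENNReal.tendsto_atTop_zero_of_tsum_ne_top hR.ne
    have h2 : Tendsto (fun K => (ENNReal.ofReal (g K R)).toReal) atTop (nhds (0:ℝ≥0∞).toReal) :=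
      (ENNReal.tendsto_toReal (by norm_num)).comp h1
    simp only [ENNReal.toReal_zero] at h2
    refine h2.congr fun K => ?_
    rw [ENNReal.toReal_ofReal (hgnn K R)]
  have habs : Tendsto (fun K => ces k C ((K+1)^2 - 1) R - XX k C R) atTop (nhds 0) := by
    apply squeeze_zero_norm (a := fun K => Real.sqrt (g K R))
    · intro K
      rw [Real.norm_eq_abs, hg]
      rw [Real.sqrt_sq_eq_abs]
    · have : Tendsto (fun K => Real.sqrt (g K R)) atTop (nhds (Real.sqrt 0)) :=
        (Real.continuous_sqrt.tendsto 0).comp hzero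
      simpa using this
  have := habs.add (tendsto_const_nhds (x := XX k C R))
  simpa using this

lemma ae_tendsto_full :
    ∀ᵐ R ∂D, Tendsto (fun n => ces k C n R) atTop (nhds (XX k C R)) := by
  filter_upwards [ae_tendsto_sq k C hC D hmap] with R hR
  set κ : ℕ → ℕ := fun n => Nat.sqrt (n+1) - 1 with hκ
  have hsq1 : ∀ n : ℕ, 1 ≤ Nat.sqrt (n+1) := fun n => Nat.le_sqrt.2 (by omega)
  have hκt : Tendsto κ atTop atTop := by
    apply tendsto_atTop_atTop.2
    intro b
    refine ⟨(b+1)*(b+1), fun n hn => ?_⟩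
    have : b + 1 ≤ Nat.sqrt (n+1) := Nat.le_sqrt.2 (by omega)
    simp only [hκ]
    omega
  have h1 : Tendsto (fun n => ces k C ((κ n + 1)^2 - 1) R) atTop (nhds (XX k C R)) :=
    hR.comp hκt
  have hbound : ∀ n : ℕ, |ces k C n R - ces k C ((κ n + 1)^2 - 1) R|
      ≤ 4 / (Nat.sqrt (n+1) : ℝ) := by
    intro n
    set s := Nat.sqrt (n+1) with hsdef
    have hs1 : 1 ≤ s := hsq1 n
    have hκs : κ n + 1 = s := by simp only [hκ]; omega
    have hm : (κ n + 1)^2 - 1 = s^2 - 1 := by rw [hκs]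
    have hs2n : s^2 ≤ n+1 := Nat.sqrt_le' (n+1)
    have hns : n + 1 < (s+1)^2 := Nat.lt_succ_sqrt' (n+1)
    have hmn : s^2 - 1 ≤ n := by omega
    have hb := ces_diff_bound k C (m := s^2 - 1) (n := n) hmn R
    rw [hm]
    refine hb.trans ?_
    have hcast : ((s^2 - 1 : ℕ) : ℝ) = (s:ℝ)^2 - 1 := by
      have h1' : 1 ≤ s^2 := Nat.one_le_iff_ne_zero.2 (by positivity)
      push_cast [Nat.cast_sub h1']
      ring
    rw [hcast]
    have hsr : (1:ℝ) ≤ (s:ℝ) := by exact_mod_cast hs1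
    have hs2nr : (s:ℝ)^2 ≤ (n:ℝ)+1 := by exact_mod_cast hs2n
    have hnsr : (n:ℝ)+1 ≤ (s:ℝ)^2 + 2*s := by
      have : (n:ℕ)+1 ≤ s^2 + 2*s := by nlinarith [hns]
      exact_mod_cast this
    have hnum : 2 * ((n:ℝ) - ((s:ℝ)^2 - 1)) ≤ 4*s := by nlinarith
    have hden : (0:ℝ) < (s:ℝ)^2 := by positivity
    calc 2 * ((n:ℝ) - ((s:ℝ)^2 - 1)) / ((n:ℝ)+1)
        ≤ 4*(s:ℝ) / (s:ℝ)^2 := by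
          apply div_le_div₀ (by positivity) hnum hden hs2nr
      _ = 4 / (s:ℝ) := by
          rw [pow_two]
          rw [div_eq_div_iff (by positivity) (by positivity)]
          ring
  have hsqt : Tendsto (fun n => (Nat.sqrt (n+1) : ℝ)) atTop atTop := by
    apply tendsto_natCast_atTop_atTop.comp
    apply tendsto_atTop_atTop.2
    intro b
    exact ⟨b*b, fun n hn => Nat.le_sqrt.2 (by omega)⟩
  have h3 : Tendsto (fun n : ℕ => 4 / (Nat.sqrt (n+1) : ℝ)) atTop (nhds 0) :=
    Tendsto.div_atTop tendsto_const_nhds hsqt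
  have h2 : Tendsto (fun n => ces k C n R - ces k C ((κ n + 1)^2 - 1) R) atTop (nhds 0) := by
    apply squeeze_zero_norm (a := fun n : ℕ => 4 / (Nat.sqrt (n+1) : ℝ)) _ h3
    intro n
    rw [Real.norm_eq_abs]
    exact hbound n
  have := h2.add h1
  simpa using this

end Conv

-- the σ-algebra of swap-invariant sets
def mInv (A : Type*) [MeasurableSpace A] : MeasurableSpace (ℕ × ℕ → A) where
  MeasurableSet' s := MeasurableSet s ∧
    ∀ a b : ℕ, permCol (Equiv.swap a b) ⁻¹' s = s
  measurableSet_empty := ⟨MeasurableSet.empty, fun a b => by simp⟩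
  measurableSet_compl := fun s hs =>
    ⟨hs.1.compl, fun a b => by rw [Set.preimage_compl, hs.2 a b]⟩
  measurableSet_iUnion := fun f hf =>
    ⟨MeasurableSet.iUnion fun i => (hf i).1, fun a b => by
      rw [Set.preimage_iUnion]
      exact Set.iUnion_congr fun i => (hf i).2 a b⟩

lemma mInv_le (A : Type*) [MeasurableSpace A] :
    mInv A ≤ (inferInstance : MeasurableSpace (ℕ × ℕ → A)) :=
  fun _s hs => hs.1

lemma measurable_XX_mInv {A : Type*} [MeasurableSpace A] (k : ℕ)
    {C : Set (Fin k → A)} (hC : MeasurableSet C) :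
    Measurable[mInv A] (XX k C) := by
  intro t ht
  refine ⟨measurable_XX k hC ht, fun a b => ?_⟩
  have hcomp : XX k C ∘ permCol (Equiv.swap a b) = XX k C :=
    funext (XX_permCol_swap k C a b)
  calc permCol (Equiv.swap a b) ⁻¹' (XX k C ⁻¹' t)
      = (XX k C ∘ permCol (Equiv.swap a b)) ⁻¹' t := rfl
    _ = XX k C ⁻¹' t := by rw [hcomp]

section Cond
variable {A : Type*} [MeasurableSpace A]
  (k : ℕ) (C : Set (Fin k → A)) (hC : MeasurableSet C)
  (D : Measure (ℕ × ℕ → A)) [IsProbabilityMeasure D]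
  (hmap : ∀ τ : Equiv.Perm ℕ, Measure.map (permCol (A := A) τ) D = D)

include hC hmap

lemma setint_xi {s : Set (ℕ × ℕ → A)} (hs : MeasurableSet[mInv A] s) (c : ℕ) :
    ∫ R in s, xi k C c R ∂D = ∫ R in s, xi k C 0 R ∂D := by
  rw [← integral_indicator hs.1, ← integral_indicator hs.1]
  have hcomp : ∀ R, Set.indicator s (xi k C 0) (permCol (Equiv.swap 0 c) R)
      = Set.indicator s (xi k C c) R := by
    intro R
    have hmem : permCol (Equiv.swap 0 c) R ∈ s ↔ R ∈ s := by
      conv_rhs => rw [← hs.2 0 c]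
      exact Iff.rfl
    have hxi : xi k C 0 (permCol (Equiv.swap 0 c) R) = xi k C c R := by
      rw [xi_permCol, Equiv.swap_apply_left]
    by_cases h : R ∈ s
    · rw [Set.indicator_of_mem (hmem.2 h), Set.indicator_of_mem h, hxi]
    · rw [Set.indicator_of_notMem (fun hh => h (hmem.1 hh)), Set.indicator_of_notMem h]
  have hint := int_permCol k C hC D hmap (Equiv.swap 0 c)
    (f := Set.indicator s (xi k C 0))
    (((measurable_xi k hC 0).indicator hs.1).aestronglyMeasurable)
  rw [← hint]
  exact (integral_congr_ae (Eventually.of_forall hcomp)).symm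

lemma setint_XX {s : Set (ℕ × ℕ → A)} (hs : MeasurableSet[mInv A] s) :
    ∫ R in s, XX k C R ∂D = ∫ R in s, xi k C 0 R ∂D := by
  have hces : ∀ n, ∫ R in s, ces k C n R ∂D = ∫ R in s, xi k C 0 R ∂D := by
    intro n
    rw [show (fun R => ces k C n R) = (fun R =>
      ((n : ℝ) + 1)⁻¹ * ∑ c ∈ Finset.range (n + 1), xi k C c R) from rfl]
    rw [integral_const_mul]
    rw [integral_finset_sum _ (fun c _ =>
      ((integrable_xi k C hC D hmap c).restrict))]
    rw [Finset.sum_congr rfl (fun c _ => setint_xi k C hC D hmap hs c)]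
    rw [Finset.sum_const, Finset.card_range, nsmul_eq_mul]
    have hcast : ((n+1:ℕ):ℝ) = (n:ℝ)+1 := by push_cast; ring
    rw [hcast, ← mul_assoc, inv_mul_cancel₀ (by positivity), one_mul]
  have hlim : Tendsto (fun j => ∫ R in s, ces k C (4^j) R ∂D) atTop
      (nhds (∫ R in s, XX k C R ∂D)) := by
    apply tendsto_integral_filter_of_dominated_convergence (fun _ => (1:ℝ))
    · exact Eventually.of_forall fun j =>
        (measurable_ces k hC (4^j)).aestronglyMeasurable
    · exact Eventually.of_forall fun j => Eventually.of_forall fun R => by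
        rw [Real.norm_eq_abs, abs_le]
        exact ⟨by linarith [ces_nonneg k C (4^j) R], ces_le_one k C (4^j) R⟩
    · exact integrable_const 1
    · exact ae_restrict_of_ae (ae_tendsto_sub k C hC D hmap ())
  have hconst : Tendsto (fun j : ℕ => ∫ R in s, ces k C (4^j) R ∂D) atTop
      (nhds (∫ R in s, xi k C 0 R ∂D)) := by
    rw [show (fun j : ℕ => ∫ R in s, ces k C (4^j) R ∂D)
      = (fun _ : ℕ => ∫ R in s, xi k C 0 R ∂D) from funext fun j => hces (4^j)]
    exact tendsto_const_nhds
  exact tendsto_nhds_unique hlim hconst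

lemma sigmaFinite_trim : SigmaFinite (D.trim (mInv_le A)) := by
  have huniv : MeasurableSet[mInv A] (Set.univ : Set (ℕ × ℕ → A)) :=
    ⟨MeasurableSet.univ, fun a b => by simp⟩
  have : IsFiniteMeasure (D.trim (mInv_le A)) := by
    constructor
    rw [trim_measurableSet_eq (mInv_le A) huniv]
    exact measure_lt_top D _
  infer_instance

lemma XX_eq_condexp :
    XX k C =ᵐ[D] D[xi k C 0 | mInv A] := by
  have := sigmaFinite_trim k C hC D hmap
  apply ae_eq_condExp_of_forall_setIntegral_eq (mInv_le A)
    (integrable_xi k C hC D hmap 0)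
  · intro s hs _
    exact (integrable_of_bdd k C hC D hmap (measurable_XX k hC)
      (fun R => abs_le.2 ⟨by linarith [XX_nonneg k C R], XX_le_one k C R⟩)).integrableOn
  · intro s hs _
    exact setint_XX k C hC D hmap hs
  · exact ⟨XX k C, (measurable_XX_mInv k hC).stronglyMeasurable, EventuallyEq.rfl⟩

end Cond

/-- For a measure `D` on `M_∞(A) = A^{ℕ×ℕ}` invariant and ergodic
under row and column permutations, for `D`-a.e. matrix `R` the empirical distribution
of columns exists: for every cylinder set from a fixed countable generating family, the
averages `(1/n!) Σ_{g ∈ S_n} χ_B((r_{i,g⁻¹(1)})_i)` converge, and the limits are the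
cylinder values of a Borel probability measure `m_R` on `A^ℕ`. -/
theorem empirical_column_distribution_exists
    {A : Type*} [MeasurableSpace A] [StandardBorelSpace A]
    (D : Measure (ℕ × ℕ → A)) [IsProbabilityMeasure D]
    (hinv : ∀ σ τ : Equiv.Perm ℕ,
      Measure.map (fun R : ℕ × ℕ → A => fun ij : ℕ × ℕ => R (σ⁻¹ ij.1, τ⁻¹ ij.2)) D = D)
    (herg : ∀ S : Set (ℕ × ℕ → A), MeasurableSet S →
      (∀ σ τ : Equiv.Perm ℕ,
        D (((fun R : ℕ × ℕ → A => fun ij : ℕ × ℕ => R (σ⁻¹ ij.1, τ⁻¹ ij.2)) ⁻¹' S) ∆ S)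
          = 0) →
      D S = 0 ∨ D S = 1)
    (𝒞 : ℕ → Σ k : ℕ, Set (Fin k → A))
    (hmeas : ∀ m, MeasurableSet (𝒞 m).2)
    (hgen : MeasurableSpace.generateFrom
        {C : Set (ℕ → A) | ∃ m, C = {v | (fun j : Fin (𝒞 m).1 => v j.val) ∈ (𝒞 m).2}}
      = (inferInstance : MeasurableSpace (ℕ → A))) :
    ∀ᵐ R ∂D, ∃ m : Measure (ℕ → A), IsProbabilityMeasure m ∧
      ∀ idx : ℕ,
        Tendsto
          (fun n : ℕ =>
            (1 / (Nat.factorial (n + 1) : ℝ)) *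
              ∑ g : Equiv.Perm (Fin (n + 1)),
                (if (fun j : Fin (𝒞 idx).1 => R (j.val, (g⁻¹ 0).val)) ∈ (𝒞 idx).2
                  then (1 : ℝ) else 0))
          atTop
          (nhds ((m {v : ℕ → A | (fun j : Fin (𝒞 idx).1 => v j.val) ∈ (𝒞 idx).2}).toReal)) := by
  classical
  -- column-permutation invariance in the convenient form
  have hmap : ∀ τ : Equiv.Perm ℕ, Measure.map (permCol (A := A) τ) D = D := by
    intro τ
    have h := hinv 1 τ⁻¹
    have heq : (fun R : ℕ × ℕ → A => fun ij : ℕ × ℕ =>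
        R ((1 : Equiv.Perm ℕ)⁻¹ ij.1, (τ⁻¹ : Equiv.Perm ℕ)⁻¹ ij.2)) = permCol (A := A) τ := by
      funext R ij
      simp [permCol]
    rw [heq] at h
    exact h
  -- the cylinder sets and their preimages under the first-column map
  set col0 : (ℕ × ℕ → A) → (ℕ → A) := fun R i => R (i, 0) with hcol0
  have hcol0m : Measurable col0 :=
    measurable_pi_lambda _ (fun _ => measurable_pi_apply _)
  set Bset : ℕ → Set (ℕ → A) :=
    fun idx => {v : ℕ → A | (fun j : Fin (𝒞 idx).1 => v j.val) ∈ (𝒞 idx).2} with hBset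
  have hB : ∀ idx, MeasurableSet (Bset idx) := by
    intro idx
    have hmap2 : Measurable (fun v : ℕ → A => (fun j : Fin (𝒞 idx).1 => v j.val)) :=
      measurable_pi_lambda _ (fun _ => measurable_pi_apply _)
    exact hmap2 (hmeas idx)
  set sset : ℕ → Set (ℕ × ℕ → A) := fun idx => col0 ⁻¹' Bset idx with hsset
  have hs : ∀ idx, MeasurableSet (sset idx) := fun idx => hcol0m (hB idx)
  have hind : ∀ idx, Set.indicator (sset idx) (fun _ => (1:ℝ))
      = xi (𝒞 idx).1 (𝒞 idx).2 0 := by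
    intro idx
    funext R
    rw [Set.indicator_apply]
    rfl
  -- a.e. convergence of the Cesàro averages
  have h1 : ∀ idx : ℕ, ∀ᵐ R ∂D, Tendsto (fun n => ces (𝒞 idx).1 (𝒞 idx).2 n R) atTop
      (nhds (XX (𝒞 idx).1 (𝒞 idx).2 R)) := fun idx =>
    ae_tendsto_full (𝒞 idx).1 (𝒞 idx).2 (hmeas idx) D hmap
  -- identification of the limit via the conditional kernel
  have h2 : ∀ idx : ℕ, ∀ᵐ R ∂D,
      ((condExpKernel D (mInv A)) R (sset idx)).toReal = XX (𝒞 idx).1 (𝒞 idx).2 R := by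
    intro idx
    have ha := ProbabilityTheory.condExpKernel_ae_eq_condExp (μ := D) (mInv_le A) (hs idx)
    have hb := XX_eq_condexp (𝒞 idx).1 (𝒞 idx).2 (hmeas idx) D hmap
    rw [← hind idx] at hb
    filter_upwards [ha, hb] with R hRa hRb
    rw [← measureReal_def, hRa, hRb]
  filter_upwards [ae_all_iff.2 h1, ae_all_iff.2 h2] with R hR1 hR2
  refine ⟨(condExpKernel D (mInv A) R).map col0, ?_, ?_⟩
  · exact Measure.isProbabilityMeasure_map hcol0m.aemeasurable
  · intro idx
    have hmapB : ((condExpKernel D (mInv A) R).map col0) (Bset idx)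
        = (condExpKernel D (mInv A)) R (sset idx) :=
      Measure.map_apply hcol0m (hB idx)
    have hseq : (fun n : ℕ =>
        (1 / (Nat.factorial (n + 1) : ℝ)) *
          ∑ g : Equiv.Perm (Fin (n + 1)),
            (if (fun j : Fin (𝒞 idx).1 => R (j.val, (g⁻¹ 0).val)) ∈ (𝒞 idx).2
              then (1 : ℝ) else 0))
        = (fun n : ℕ => ces (𝒞 idx).1 (𝒞 idx).2 n R) := by
      funext n
      exact perm_avg_eq n (fun c => xi (𝒞 idx).1 (𝒞 idx).2 c R)
    rw [show {v : ℕ → A | (fun j : Fin (𝒞 idx).1 => v j.val) ∈ (𝒞 idx).2} = Bset idx from rfl,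
      hmapB, hR2 idx, hseq]
    exact hR1 idx
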